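/- Suppose k* ∈ {1, …, K−1} and x* ∈ [c_{k*}/c_{k*+1}, 1] satisfy R(k*, x*) < 1. Then there exist k̃ ∈ {1, …, k*} and x̃ ∈ [c_{k̃}/c_{k̃+1}, 1] with R(k̃, x̃) = 1, and setting B̃ = Q(k̃, x̃), one has B(k̃, 1) ≤ B̃ ≤ B(k̃+1, 1). -/

import Mathlib

/-- if `k* ∈ {1,…,K−1}` and `x* ∈ [c_{k*}/c_{k*+1}, 1]` satisfy
`R(k*, x*) < 1`, then there exist `k̃ ∈ {1,…,k*}` and `x̃ ∈ [c_{k̃}/c_{k̃+1}, 1]` with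
`R(k̃, x̃) = 1`, and the quantity `B̃ = Q(k̃, x̃)` satisfies
`B(k̃,1) ≤ B̃ ≤ B(k̃+1,1)`. Costs are indexed by `{1, …, K}`. -/
theorem exists_ktilde_xtilde
    (K : ℕ) (hK : 2 ≤ K) (c π : ℕ → ℝ) (Q R B : ℕ → ℝ → ℝ)
    (hc : ∀ t ∈ Finset.Icc 1 K, 0 < c t)
    (hcmono : ∀ j ∈ Finset.Icc 1 (K - 1), c j < c (j + 1))
    (hπpos : ∀ t ∈ Finset.Icc 1 K, 0 < π t)
    (hπsum : ∑ t ∈ Finset.Icc 1 K, π t = 1)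
    (hQ : ∀ k ∈ Finset.Icc 1 K, ∀ x ∈ Set.Ioc (0 : ℝ) 1,
      Q k x = (∑ t ∈ Finset.Icc 1 k, π t * c t)
        + ∑ t ∈ Finset.Icc (k + 1) K, π t * Real.sqrt (c t * c k / x))
    (hR : ∀ k ∈ Finset.Icc 1 K, ∀ x ∈ Set.Ioc (0 : ℝ) 1,
      R k x = 2 * ((∑ t ∈ Finset.Icc 1 k, π t * c t * x / c k)
        + ∑ t ∈ Finset.Icc (k + 1) K, π t))
    (hB : ∀ k ∈ Finset.Icc 1 K, ∀ x ∈ Set.Ioc (0 : ℝ) 1,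
      B k x = Q k x / R k x)
    (kstar : ℕ) (hkstar : kstar ∈ Finset.Icc 1 (K - 1))
    (xstar : ℝ) (hxstar : xstar ∈ Set.Icc (c kstar / c (kstar + 1)) 1)
    (hRlt : R kstar xstar < 1) :
    ∃ ktilde ∈ Finset.Icc 1 kstar,
      ∃ xtilde ∈ Set.Icc (c ktilde / c (ktilde + 1)) 1,
        R ktilde xtilde = 1 ∧
        B ktilde 1 ≤ Q ktilde xtilde ∧ Q ktilde xtilde ≤ B (ktilde + 1) 1 := by
  have hks := Finset.mem_Icc.mp hkstar
  have hc' : ∀ t, 1 ≤ t → t ≤ K → 0 < c t := fun t h1 h2 => hc t (Finset.mem_Icc.mpr ⟨h1, h2⟩)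
  have hπ' : ∀ t, 1 ≤ t → t ≤ K → 0 < π t := fun t h1 h2 => hπpos t (Finset.mem_Icc.mpr ⟨h1, h2⟩)
  have hmono' : ∀ j, 1 ≤ j → j ≤ K - 1 → c j < c (j + 1) :=
    fun j h1 h2 => hcmono j (Finset.mem_Icc.mpr ⟨h1, h2⟩)
  obtain ⟨P, hPdef⟩ : ∃ P : ℕ → ℝ, P = fun k => ∑ t ∈ Finset.Icc 1 k, π t * c t := ⟨_, rfl⟩
  obtain ⟨T, hTdef⟩ : ∃ T : ℕ → ℝ, T = fun k => ∑ t ∈ Finset.Icc (k + 1) K, π t := ⟨_, rfl⟩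
  obtain ⟨r, hrdef⟩ : ∃ r : ℕ → ℝ → ℝ, r = fun k x => 2 * (P k * x / c k + T k) := ⟨_, rfl⟩
  obtain ⟨q, hqdef⟩ : ∃ q : ℕ → ℝ → ℝ,
      q = fun k x => P k + ∑ t ∈ Finset.Icc (k + 1) K, π t * Real.sqrt (c t * c k / x) :=
    ⟨_, rfl⟩
  have hPpos : ∀ k, 1 ≤ k → k ≤ K → 0 < P k := by
    intro k h1 h2
    rw [hPdef]
    apply Finset.sum_pos
    · intro t ht
      have ht' := Finset.mem_Icc.mp ht
      exact mul_pos (hπ' t ht'.1 (le_trans ht'.2 h2)) (hc' t ht'.1 (le_trans ht'.2 h2))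
    · exact ⟨1, Finset.mem_Icc.mpr ⟨le_refl 1, h1⟩⟩
  have hTnn : ∀ k, 0 ≤ T k := by
    intro k
    rw [hTdef]
    apply Finset.sum_nonneg
    intro t ht
    have ht' := Finset.mem_Icc.mp ht
    exact le_of_lt (hπ' t (by omega) ht'.2)
  have hsplitT : ∀ k, k + 1 ≤ K → T k = π (k + 1) + T (k + 1) := by
    intro k h
    have hmem : k + 1 ∈ Finset.Icc (k + 1) K := Finset.mem_Icc.mpr ⟨le_refl _, h⟩
    simp only [hTdef]
    rw [← Finset.add_sum_erase _ _ hmem, Finset.Icc_erase_left, ← Finset.Icc_add_one_left_eq_Ioc]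
  have hsplitP : ∀ k, P (k + 1) = P k + π (k + 1) * c (k + 1) := by
    intro k
    simp only [hPdef]
    rw [Finset.sum_Icc_succ_top (by omega : 1 ≤ k + 1)]
  have hr11 : r 1 1 = 2 := by
    have hc1 : (c 1) ≠ 0 := ne_of_gt (hc' 1 le_rfl (by omega))
    have hmem : 1 ∈ Finset.Icc 1 K := Finset.mem_Icc.mpr ⟨le_refl _, by omega⟩
    have hsum : π 1 + T 1 = 1 := by
      rw [← hπsum, hTdef]
      rw [← Finset.add_sum_erase _ _ hmem, Finset.Icc_erase_left, ← Finset.Icc_add_one_left_eq_Ioc]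
    have hP1 : P 1 = π 1 * c 1 := by
      simp only [hPdef]
      simp
    simp only [hrdef, hP1]
    field_simp
    linarith
  have hrmono : ∀ k, 1 ≤ k → k ≤ K → ∀ x y : ℝ, x < y → r k x < r k y := by
    intro k h1 h2 x y hxy
    have hp : 0 < P k / c k := div_pos (hPpos k h1 h2) (hc' k h1 h2)
    have e1 : r k x = 2 * (P k / c k * x + T k) := by simp only [hrdef]; ring
    have e2 : r k y = 2 * (P k / c k * y + T k) := by simp only [hrdef]; ring
    rw [e1, e2]
    nlinarith
  have hrle : ∀ k, 1 ≤ k → k ≤ K → ∀ x y : ℝ, x ≤ y → r k x ≤ r k y := by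
    intro k h1 h2 x y hxy
    rcases eq_or_lt_of_le hxy with h | h
    · rw [h]
    · exact le_of_lt (hrmono k h1 h2 x y h)
  have hrpos : ∀ k, 1 ≤ k → k ≤ K → ∀ x : ℝ, 0 < x → 0 < r k x := by
    intro k h1 h2 x hx
    have := hPpos k h1 h2
    have := hc' k h1 h2
    have := hTnn k
    have : 0 < P k * x / c k := by positivity
    simp only [hrdef]
    nlinarith [hTnn k]
  have glue_r : ∀ k, 1 ≤ k → k + 1 ≤ K → r k (c k / c (k + 1)) = r (k + 1) 1 := by
    intro k h1 h2
    have hck : (c k) ≠ 0 := ne_of_gt (hc' k h1 (by omega))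
    have hck1 : (c (k + 1)) ≠ 0 := ne_of_gt (hc' (k + 1) (by omega) h2)
    simp only [hrdef]
    rw [hsplitP k, hsplitT k h2]
    field_simp
    ring
  have glue_q : ∀ k, 1 ≤ k → k + 1 ≤ K → q k (c k / c (k + 1)) = q (k + 1) 1 := by
    intro k h1 h2
    have hck : (0:ℝ) < c k := hc' k h1 (by omega)
    have hck1 : (0:ℝ) < c (k + 1) := hc' (k + 1) (by omega) h2
    have hmem : k + 1 ∈ Finset.Icc (k + 1) K := Finset.mem_Icc.mpr ⟨le_refl _, h2⟩
    have harg : ∀ t, c t * c k / (c k / c (k + 1)) = c t * c (k + 1) / 1 := by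
      intro t
      field_simp
    simp only [hqdef]
    rw [hsplitP k]
    have hstep : ∑ t ∈ Finset.Icc (k + 1) K, π t * Real.sqrt (c t * c k / (c k / c (k + 1)))
        = π (k + 1) * c (k + 1)
          + ∑ t ∈ Finset.Icc (k + 1 + 1) K, π t * Real.sqrt (c t * c (k + 1) / 1) := by
      have hcongr : ∑ t ∈ Finset.Icc (k + 1) K, π t * Real.sqrt (c t * c k / (c k / c (k + 1)))
          = ∑ t ∈ Finset.Icc (k + 1) K, π t * Real.sqrt (c t * c (k + 1) / 1) := by
        apply Finset.sum_congr rfl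
        intro t _
        rw [harg t]
      rw [hcongr, ← Finset.add_sum_erase _ _ hmem, Finset.Icc_erase_left, ← Finset.Icc_add_one_left_eq_Ioc]
      congr 1
      rw [div_one, Real.sqrt_mul_self (le_of_lt hck1)]
    rw [hstep]
    ring
  have hqmono : ∀ k, 1 ≤ k → k ≤ K → ∀ x y : ℝ, 0 < x → x ≤ y → q k y ≤ q k x := by
    intro k hk1 hk x y hx hxy
    have hy : 0 < y := lt_of_lt_of_le hx hxy
    simp only [hqdef]
    have : ∀ t ∈ Finset.Icc (k + 1) K,
        π t * Real.sqrt (c t * c k / y) ≤ π t * Real.sqrt (c t * c k / x) := by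
      intro t ht
      have ht' := Finset.mem_Icc.mp ht
      have hπt : 0 ≤ π t := le_of_lt (hπ' t (by omega) ht'.2)
      apply mul_le_mul_of_nonneg_left _ hπt
      apply Real.sqrt_le_sqrt
      have hcc : 0 ≤ c t * c k :=
        le_of_lt (mul_pos (hc' t (by omega) ht'.2) (hc' k hk1 hk))
      rw [div_le_div_iff₀ hy hx]
      exact mul_le_mul_of_nonneg_left hxy hcc
    linarith [Finset.sum_le_sum this]
  have hqnn : ∀ k, 1 ≤ k → k ≤ K → ∀ x : ℝ, 0 ≤ q k x := by
    intro k h1 h2 x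
    simp only [hqdef]
    have hs : 0 ≤ ∑ t ∈ Finset.Icc (k + 1) K, π t * Real.sqrt (c t * c k / x) := by
      apply Finset.sum_nonneg
      intro t ht
      have ht' := Finset.mem_Icc.mp ht
      exact mul_nonneg (le_of_lt (hπ' t (by omega) ht'.2)) (Real.sqrt_nonneg _)
    linarith [hPpos k h1 h2]
  -- bridges
  have hRr : ∀ k, k ∈ Finset.Icc 1 K → ∀ x, x ∈ Set.Ioc (0:ℝ) 1 → R k x = r k x := by
    intro k hk x hx
    rw [hR k hk x hx]
    simp only [hrdef, hPdef, hTdef]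
    rw [Finset.sum_mul, Finset.sum_div]
  have hQq : ∀ k, k ∈ Finset.Icc 1 K → ∀ x, x ∈ Set.Ioc (0:ℝ) 1 → Q k x = q k x := by
    intro k hk x hx
    rw [hQ k hk x hx]
    simp only [hqdef, hPdef]
  -- the downward walk
  have key : ∀ k, 1 ≤ k → k ≤ K - 1 → r k (c k / c (k + 1)) < 1 →
      ∃ kt, 1 ≤ kt ∧ kt ≤ k ∧ r kt (c kt / c (kt + 1)) < 1 ∧ 1 ≤ r kt 1 := by
    intro k
    induction k using Nat.strong_induction_on with
    | _ k ih =>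
      intro hk1 hkK hlt
      by_cases hcase : 1 ≤ r k 1
      · exact ⟨k, hk1, le_refl k, hlt, hcase⟩
      · push_neg at hcase
        have hk2 : 2 ≤ k := by
          by_contra h
          have hk1' : k = 1 := by omega
          rw [hk1', hr11] at hcase
          linarith
        obtain ⟨m, rfl⟩ : ∃ m, k = m + 1 := ⟨k - 1, by omega⟩
        have hglue := glue_r m (by omega) (by omega)
        have hlt' : r m (c m / c (m + 1)) < 1 := by rw [hglue]; exact hcase
        obtain ⟨kt, h1, h2, h3, h4⟩ := ih m (by omega) (by omega) (by omega) hlt'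
        exact ⟨kt, h1, by omega, h3, h4⟩
  -- starting point
  have hksK : kstar + 1 ≤ K := by omega
  have hcks : 0 < c kstar := hc' kstar hks.1 (by omega)
  have hcks1 : 0 < c (kstar + 1) := hc' (kstar + 1) (by omega) hksK
  have hlos : 0 < c kstar / c (kstar + 1) := div_pos hcks hcks1
  have hxs0 : 0 < xstar := lt_of_lt_of_le hlos hxstar.1
  have hxsIoc : xstar ∈ Set.Ioc (0:ℝ) 1 := ⟨hxs0, hxstar.2⟩
  have hksIcc : kstar ∈ Finset.Icc 1 K := Finset.mem_Icc.mpr ⟨hks.1, by omega⟩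
  have hstart : r kstar (c kstar / c (kstar + 1)) < 1 := by
    have h1 : r kstar (c kstar / c (kstar + 1)) ≤ r kstar xstar :=
      hrle kstar hks.1 (by omega) _ _ hxstar.1
    have h2 : r kstar xstar < 1 := by rw [← hRr kstar hksIcc xstar hxsIoc]; exact hRlt
    linarith
  obtain ⟨kt, hkt1, hktks, hktlo, hkt1ge⟩ := key kstar hks.1 hks.2 hstart
  have hktK1 : kt + 1 ≤ K := by omega
  have hktK : kt ≤ K := by omega
  have hckt : 0 < c kt := hc' kt hkt1 hktK
  have hckt1 : 0 < c (kt + 1) := hc' (kt + 1) (by omega) hktK1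
  have hPkt : 0 < P kt := hPpos kt hkt1 hktK
  have hlo0 : 0 < c kt / c (kt + 1) := div_pos hckt hckt1
  have hlo1 : c kt / c (kt + 1) < 1 := (div_lt_one hckt1).mpr (hmono' kt hkt1 (by omega))
  set xt : ℝ := (1 / 2 - T kt) * c kt / P kt with hxtdef
  have hrxt : r kt xt = 1 := by
    simp only [hrdef, hxtdef]
    field_simp
    ring
  have hxt1 : xt ≤ 1 := by
    by_contra h
    push_neg at h
    have := hrmono kt hkt1 hktK 1 xt h
    rw [hrxt] at this
    linarith
  have hloxt : c kt / c (kt + 1) ≤ xt := by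
    by_contra h
    push_neg at h
    have := hrmono kt hkt1 hktK xt _ h
    rw [hrxt] at this
    linarith
  have hxt0 : 0 < xt := lt_of_lt_of_le hlo0 hloxt
  have hktIcc : kt ∈ Finset.Icc 1 K := Finset.mem_Icc.mpr ⟨hkt1, hktK⟩
  have hkt1Icc : kt + 1 ∈ Finset.Icc 1 K := Finset.mem_Icc.mpr ⟨by omega, hktK1⟩
  have hxtIoc : xt ∈ Set.Ioc (0:ℝ) 1 := ⟨hxt0, hxt1⟩
  have h1Ioc : (1:ℝ) ∈ Set.Ioc (0:ℝ) 1 := ⟨one_pos, le_refl 1⟩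
  refine ⟨kt, Finset.mem_Icc.mpr ⟨hkt1, hktks⟩, xt, ⟨hloxt, hxt1⟩, ?_, ?_, ?_⟩
  · rw [hRr kt hktIcc xt hxtIoc]; exact hrxt
  · rw [hB kt hktIcc 1 h1Ioc, hQq kt hktIcc xt hxtIoc, hQq kt hktIcc 1 h1Ioc,
      hRr kt hktIcc 1 h1Ioc]
    have h1 : q kt 1 / r kt 1 ≤ q kt 1 := div_le_self (hqnn kt hkt1 hktK 1) hkt1ge
    have h2 : q kt 1 ≤ q kt xt := hqmono kt hkt1 hktK xt 1 hxt0 hxt1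
    linarith
  · rw [hQq kt hktIcc xt hxtIoc, hB (kt + 1) hkt1Icc 1 h1Ioc, hQq (kt + 1) hkt1Icc 1 h1Ioc,
      hRr (kt + 1) hkt1Icc 1 h1Ioc]
    have hQle : q kt xt ≤ q (kt + 1) 1 := by
      rw [← glue_q kt hkt1 hktK1]
      exact hqmono kt hkt1 hktK _ xt hlo0 hloxt
    have hRlt1 : r (kt + 1) 1 < 1 := by
      rw [← glue_r kt hkt1 hktK1]
      exact hktlo
    have hRpos1 : 0 < r (kt + 1) 1 := hrpos (kt + 1) (by omega) hktK1 1 one_pos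
    have hqn : 0 ≤ q (kt + 1) 1 := hqnn (kt + 1) (by omega) hktK1 1
    have hfinal : q (kt + 1) 1 ≤ q (kt + 1) 1 / r (kt + 1) 1 := by
      rw [le_div_iff₀ hRpos1]
      nlinarith
    linarith
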